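/- Let u: A × C → ℝ be affine in y over a convex set C ⊆ ℝ^d, let a ∈ A, and suppose a sequence of predictions and outcomes satisfies that whenever the agent best responds to ŷ_t with action a, we have u(a, ŷ_t) ≥ u(a', ŷ_t) for all a'. Let ȳ_a and ŷ̄_a be the averages of outcomes and predictions respectively over the rounds where action a is played, with n_a such rounds. Then for any fixed alternative action a', the total regret on those rounds satisfies Σ_{t: a_t=a}(u(a', y_t) − u(a, y_t)) = n_a·(u(a', ȳ_a) − u(a, ȳ_a)) ≤ n_a·(u(a', ŷ̄_a) − u(a, ŷ̄_a)) + 2L·n_a·‖ŷ̄_a − ȳ_a‖∞ ≤ 2L·n_a·‖ŷ̄_a − ȳ_a‖∞. -/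

import Mathlib

open Finset

lemma sum_affine_avg {d T : ℕ} (S : Finset (Fin T)) (hS : S.Nonempty)
    (y : Fin T → Fin d → ℝ) (v : Fin d → ℝ) (c : ℝ) :
    (S.card : ℝ) * ((∑ i, v i * ((1/(S.card:ℝ)) • ∑ t ∈ S, y t) i) + c)
      = ∑ t ∈ S, ((∑ i, v i * y t i) + c) := by
  have hc : (S.card : ℝ) ≠ 0 := Nat.cast_ne_zero.mpr (Finset.card_ne_zero.mpr hS)
  have key : (∑ i, v i * ((1/(S.card:ℝ)) • ∑ t ∈ S, y t) i)
      = (1/(S.card:ℝ)) * ∑ t ∈ S, ∑ i, v i * y t i := by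
    simp only [Pi.smul_apply, Finset.sum_apply, smul_eq_mul]
    simp_rw [Finset.mul_sum]
    rw [Finset.sum_comm]
    exact Finset.sum_congr rfl fun t _ => Finset.sum_congr rfl fun i _ => by ring
  rw [key, Finset.sum_add_distrib, Finset.sum_const, nsmul_eq_mul]
  field_simp

/-- Per-action regret bound: on the rounds where a best-responding agent plays action a,
the regret to any fixed alternative a' is controlled by the conditional bias. -/
theorem per_action_regret_bound
    {d : ℕ} {A : Type*} [DecidableEq A]
    (T : ℕ) (L : ℝ) (hL : 0 ≤ L)
    (C : Set (Fin d → ℝ)) (hC : Convex ℝ C)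
    (yhat yout : Fin T → (Fin d → ℝ))
    (hin : ∀ t, yhat t ∈ C ∧ yout t ∈ C)
    (u : A → (Fin d → ℝ) → ℝ)
    (haff : ∀ a, ∃ (v : Fin d → ℝ) (c : ℝ), ∀ y, u a y = (∑ i, v i * y i) + c)
    (hLip : ∀ a y z, |u a y - u a z| ≤ L * ‖y - z‖)
    (act : Fin T → A)
    (hbr : ∀ t a', u (act t) (yhat t) ≥ u a' (yhat t))
    (a : A)
    (S : Finset (Fin T)) (hS : S = Finset.univ.filter (fun t => act t = a))
    (hSne : S.Nonempty)
    (na : ℕ) (hna : na = S.card)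
    (ybar yhatbar : Fin d → ℝ)
    (hybar : ybar = (1 / (na : ℝ)) • ∑ t ∈ S, yout t)
    (hyhatbar : yhatbar = (1 / (na : ℝ)) • ∑ t ∈ S, yhat t)
    (a' : A) :
    (∑ t ∈ S, (u a' (yout t) - u a (yout t))
        = (na : ℝ) * (u a' ybar - u a ybar)) ∧
    (na : ℝ) * (u a' ybar - u a ybar)
        ≤ (na : ℝ) * (u a' yhatbar - u a yhatbar)
          + 2 * L * (na : ℝ) * ‖yhatbar - ybar‖ ∧
    (na : ℝ) * (u a' yhatbar - u a yhatbar) + 2 * L * (na : ℝ) * ‖yhatbar - ybar‖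
        ≤ 2 * L * (na : ℝ) * ‖yhatbar - ybar‖ := by
  have hna0 : 0 < (na : ℝ) := by
    have := Finset.card_pos.mpr hSne
    rw [hna]; exact_mod_cast this
  have hav : ∀ (b : A) (y : Fin T → Fin d → ℝ),
      (na : ℝ) * u b ((1 / (na : ℝ)) • ∑ t ∈ S, y t) = ∑ t ∈ S, u b (y t) := by
    intro b y
    obtain ⟨v, c, hvc⟩ := haff b
    simp only [hvc]
    rw [hna]
    exact sum_affine_avg S hSne y v c
  have part1 : ∑ t ∈ S, (u a' (yout t) - u a (yout t))
      = (na : ℝ) * (u a' ybar - u a ybar) := by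
    rw [Finset.sum_sub_distrib, mul_sub, hybar, hav, hav]
  have hbrS : ∀ t ∈ S, u a' (yhat t) ≤ u a (yhat t) := by
    intro t ht
    rw [hS, Finset.mem_filter] at ht
    have := hbr t a'
    rw [ht.2] at this
    exact this
  have part3 : (na : ℝ) * (u a' yhatbar - u a yhatbar) ≤ 0 := by
    have : (na : ℝ) * (u a' yhatbar - u a yhatbar)
        = ∑ t ∈ S, (u a' (yhat t) - u a (yhat t)) := by
      rw [Finset.sum_sub_distrib, mul_sub, hyhatbar, hav, hav]
    rw [this]
    exact Finset.sum_nonpos fun t ht => sub_nonpos.mpr (hbrS t ht)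
  refine ⟨part1, ?_, by linarith⟩
  have h1 : |u a' ybar - u a' yhatbar| ≤ L * ‖yhatbar - ybar‖ := by
    rw [← norm_sub_rev]; exact hLip a' ybar yhatbar
  have h2 : |u a ybar - u a yhatbar| ≤ L * ‖yhatbar - ybar‖ := by
    rw [← norm_sub_rev]; exact hLip a ybar yhatbar
  have h1' := abs_le.mp h1
  have h2' := abs_le.mp h2
  nlinarith [hna0.le, h1'.1, h1'.2, h2'.1, h2'.2]
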